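/- Let H be a subgroup of G. Then ℓ∞(G/H) is amenable if and only if there exists a state m on ℓ∞(G) such that m*ℓ∞(G) ⊆ ℓ∞(G/H) and m(1_H) ≠ 0. -/

import Mathlib

set_option linter.unusedSectionVars false

open scoped ENNReal ComplexOrder

noncomputable section

namespace QG

variable {G : Type*} [Group G]

/-- `ℓ∞(G)`: bounded complex functions on `G`. -/
abbrev Linf (G : Type*) : Type _ := lp (fun _ : G => ℂ) ∞

/-- `ℓ¹(G)`: summable complex functions on `G`. -/
abbrev L1 (G : Type*) : Type _ := lp (fun _ : G => ℂ) 1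

/-- The dual space `ℓ∞(G)*`. -/
abbrev DualLinf (G : Type*) : Type _ := StrongDual ℂ (Linf G)

lemma summable_norm (f : L1 G) : Summable fun s => ‖f s‖ := by
  have h := (lp.memℓp f).summable (by simp)
  simpa using h

lemma norm_apply_le (x : Linf G) (s : G) : ‖x s‖ ≤ ‖x‖ :=
  lp.norm_apply_le_norm ENNReal.top_ne_zero x s

/-- The constant function `1` in `ℓ∞(G)`. -/
def one' : Linf G :=
  ⟨fun _ => (1 : ℂ), memℓp_infty ⟨1, by rintro r ⟨t, rfl⟩; simp⟩⟩

/-- Left translation: `(L_s x)(t) = x (s * t)`. -/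
def Ltrans (s : G) (x : Linf G) : Linf G :=
  ⟨fun t => x (s * t),
    memℓp_infty (BddAbove.mono (by rintro r ⟨t, rfl⟩; exact ⟨s * t, rfl⟩) (lp.memℓp x).bddAbove)⟩

@[simp] lemma Ltrans_apply (s : G) (x : Linf G) (t : G) : Ltrans s x t = x (s * t) := rfl

lemma norm_Ltrans_le (s : G) (x : Linf G) : ‖Ltrans s x‖ ≤ ‖x‖ := by
  rw [lp.norm_eq_ciSup]
  exact ciSup_le fun t => norm_apply_le x (s * t)

/-- The action `m * x` of `m ∈ ℓ∞(G)*` on `x ∈ ℓ∞(G)`: `(m*x)(s) = m (L_s x)`. -/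
def starAct (m : DualLinf G) (x : Linf G) : Linf G :=
  ⟨fun s => m (Ltrans s x),
    memℓp_infty ⟨‖m‖ * ‖x‖, by
      rintro r ⟨s, rfl⟩
      calc ‖m (Ltrans s x)‖ ≤ ‖m‖ * ‖Ltrans s x‖ := m.le_opNorm _
        _ ≤ ‖m‖ * ‖x‖ :=
          mul_le_mul_of_nonneg_left (norm_Ltrans_le s x) (norm_nonneg m)⟩⟩

@[simp] lemma starAct_apply (m : DualLinf G) (x : Linf G) (s : G) :
    starAct m x s = m (Ltrans s x) := rfl

lemma summable_mul_bound (f : L1 G) (x : Linf G) (t : G) :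
    Summable fun s => ‖f s * x (s * t)‖ := by
  refine Summable.of_nonneg_of_le (fun s => norm_nonneg _) (fun s => ?_)
    ((summable_norm f).mul_right ‖x‖)
  rw [norm_mul]
  exact mul_le_mul_of_nonneg_left (norm_apply_le x (s * t)) (norm_nonneg _)

/-- The right action of `ℓ¹(G)` on `ℓ∞(G)`: `(x * f)(t) = ∑_s f s * x (s * t)`. -/
def rAct (x : Linf G) (f : L1 G) : Linf G :=
  ⟨fun t => ∑' s, f s * x (s * t),
    memℓp_infty ⟨(∑' s, ‖f s‖) * ‖x‖, by
      rintro r ⟨t, rfl⟩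
      calc ‖∑' s, f s * x (s * t)‖ ≤ ∑' s, ‖f s * x (s * t)‖ :=
            norm_tsum_le_tsum_norm (summable_mul_bound f x t)
        _ ≤ ∑' s, ‖f s‖ * ‖x‖ :=
            Summable.tsum_le_tsum (fun s => by
                rw [norm_mul]
                exact mul_le_mul_of_nonneg_left (norm_apply_le x (s * t)) (norm_nonneg _))
              (summable_mul_bound f x t) ((summable_norm f).mul_right _)
        _ = (∑' s, ‖f s‖) * ‖x‖ := tsum_mul_right⟩⟩

@[simp] lemma rAct_apply (x : Linf G) (f : L1 G) (t : G) :
    rAct x f t = ∑' s, f s * x (s * t) := rfl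

/-- The shear equivalence of `G × G`. -/
def shearEquiv (G : Type*) [Group G] : G × G ≃ G × G where
  toFun p := (p.2, p.2⁻¹ * p.1)
  invFun p := (p.1 * p.2, p.1)
  left_inv p := by simp
  right_inv p := by simp

lemma conv_prod_summable (f g : L1 G) :
    Summable fun p : G × G => ‖f p.2‖ * ‖g (p.2⁻¹ * p.1)‖ := by
  have h0 : Summable fun p : G × G => ‖f p.1‖ * ‖g p.2‖ :=
    (summable_norm f).mul_of_nonneg (summable_norm g) (fun _ => norm_nonneg _)
      (fun _ => norm_nonneg _)
  have key : Summable ((fun p : G × G => ‖f p.1‖ * ‖g p.2‖) ∘ (shearEquiv G)) :=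
    (shearEquiv G).summable_iff.mpr h0
  have heq : ((fun p : G × G => ‖f p.1‖ * ‖g p.2‖) ∘ (shearEquiv G)) =
      fun p : G × G => ‖f p.2‖ * ‖g (p.2⁻¹ * p.1)‖ := by
    funext p
    simp [shearEquiv, Function.comp]
  rwa [heq] at key

lemma conv_memℓp (f g : L1 G) : Memℓp (fun t : G => ∑' s, f s * g (s⁻¹ * t)) 1 := by
  have hp := conv_prod_summable f g
  obtain ⟨h1, h2⟩ :=
    (summable_prod_of_nonneg (fun p => mul_nonneg (norm_nonneg _) (norm_nonneg _))).1 hp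
  apply memℓp_gen
  simp only [ENNReal.toReal_one, Real.rpow_one]
  refine Summable.of_nonneg_of_le (fun t => norm_nonneg _) (fun t => ?_) h2
  calc ‖∑' s, f s * g (s⁻¹ * t)‖ ≤ ∑' s, ‖f s * g (s⁻¹ * t)‖ :=
        norm_tsum_le_tsum_norm (by simpa only [norm_mul] using h1 t)
    _ = ∑' s, ‖f s‖ * ‖g (s⁻¹ * t)‖ := tsum_congr fun s => norm_mul _ _

/-- Convolution on `ℓ¹(G)`: `(f * g)(t) = ∑_s f s * g (s⁻¹ t)`. -/
def conv (f g : L1 G) : L1 G :=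
  ⟨fun t => ∑' s, f s * g (s⁻¹ * t), conv_memℓp f g⟩

@[simp] lemma conv_apply (f g : L1 G) (t : G) : conv f g t = ∑' s, f s * g (s⁻¹ * t) := rfl

open Classical in
/-- The unit `ε = δ_e` of the convolution algebra `ℓ¹(G)`. -/
def eps : L1 G :=
  ⟨fun t => if t = 1 then 1 else 0, by
    apply memℓp_gen
    refine summable_of_ne_finset_zero (s := ({1} : Finset G)) ?_
    intro t ht
    simp only [Finset.mem_singleton] at ht
    simp [ht]⟩

open Classical in
/-- Multiplication by the indicator function of `H`: `f · 1_H`. -/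
def mulIndic (H : Subgroup G) (f : L1 G) : L1 G :=
  ⟨fun s => if s ∈ H then f s else 0, by
    apply memℓp_gen
    simp only [ENNReal.toReal_one, Real.rpow_one]
    refine Summable.of_nonneg_of_le (fun s => norm_nonneg _) (fun s => ?_) (summable_norm f)
    by_cases h : s ∈ H <;> simp [h]⟩

open Classical in
/-- The indicator function `1_H ∈ ℓ∞(G)` of a subgroup `H`. -/
def indic (H : Subgroup G) : Linf G :=
  ⟨fun s => if s ∈ H then 1 else 0,
    memℓp_infty ⟨1, by rintro r ⟨s, rfl⟩; by_cases h : s ∈ H <;> simp [h]⟩⟩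

/-- A state on `ℓ∞(G)`: unital positive functional. -/
def IsState (m : DualLinf G) : Prop :=
  m one' = 1 ∧ ∀ x : Linf G, (∀ s, 0 ≤ x s) → 0 ≤ m x

/-- `f ∈ Ann_L(m)`, i.e. `f * m = 0`. -/
def memAnnL (m : DualLinf G) (f : L1 G) : Prop :=
  ∀ x : Linf G, ∑' s, f s * m (Ltrans s x) = 0

/-- `f ∈ Inv_L(m, x₀)`, i.e. `f * m = f(x₀) · m`. -/
def memInvLx (m : DualLinf G) (x₀ : Linf G) (f : L1 G) : Prop :=
  ∀ x : Linf G, ∑' s, f s * m (Ltrans s x) = (∑' s, f s * x₀ s) * m x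

/-- `f ∈ Inv_L(m)`, i.e. `f * m = f(1) · m`. -/
def memInvL (m : DualLinf G) (f : L1 G) : Prop :=
  ∀ x : Linf G, ∑' s, f s * m (Ltrans s x) = (∑' s, f s) * m x

/-- A right idempotent state: a state with `m (m * x) = m x` for all `x`. -/
def IsRightIdempotentState (m : DualLinf G) : Prop :=
  IsState m ∧ ∀ x : Linf G, m (starAct m x) = m x

/-- A character of `G` in `ℓ∞(G)`. -/
def IsCharacter (x : Linf G) : Prop :=
  (∀ s t : G, x (s * t) = x s * x t) ∧ ∀ s : G, ‖x s‖ = 1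

/-- `ℓ∞(G/H)`, the right-`H`-invariant elements of `ℓ∞(G)`. -/
def LinfQuot (H : Subgroup G) : Set (Linf G) :=
  {x | ∀ s : G, ∀ h ∈ H, x (s * h) = x s}

/-- `J¹(G,H)`, the preannihilator of `ℓ∞(G/H)` in `ℓ¹(G)`. -/
def J1 (H : Subgroup G) : Set (L1 G) :=
  {f | ∀ x ∈ LinfQuot H, ∑' s, f s * x s = 0}

/-- `E` witnesses relative amenability of `ℓ∞(G/H)`: a unital positive
`ℓ¹(G)`-module map `ℓ∞(G) → ℓ∞(G)` with range inside `ℓ∞(G/H)`. -/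
def IsRelAmenMap (H : Subgroup G) (E : Linf G →ₗ[ℂ] Linf G) : Prop :=
  E one' = one' ∧
  (∀ x : Linf G, (∀ s, 0 ≤ x s) → ∀ s, 0 ≤ E x s) ∧
  (∀ x : Linf G, E x ∈ LinfQuot H) ∧
  (∀ (x : Linf G) (f : L1 G), E (rAct x f) = rAct (E x) f)

/-- `ℓ∞(G/H)` is relatively amenable. -/
def RelAmen (H : Subgroup G) : Prop :=
  ∃ E : Linf G →ₗ[ℂ] Linf G, IsRelAmenMap H E

/-- `ℓ∞(G/H)` is amenable. -/
def Amen (H : Subgroup G) : Prop :=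
  ∃ E : Linf G →ₗ[ℂ] Linf G, IsRelAmenMap H E ∧ ∀ x ∈ LinfQuot H, E x = x

/-- Amenability of a discrete group: existence of a left invariant mean. -/
def GroupAmenable (K : Type*) [Group K] : Prop :=
  ∃ μ : DualLinf K, IsState μ ∧ ∀ (k : K) (y : Linf K), μ (Ltrans k y) = μ y

/-- `H`-invariance of a functional on `ℓ∞(G)`. -/
def HInvariant (H : Subgroup G) (μ : DualLinf G) : Prop :=
  ∀ h ∈ H, ∀ x : Linf G, μ (Ltrans h x) = μ x

/-- `J` has a bounded right approximate identity contained in `S`. -/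
def HasBraiIn (J S : Set (L1 G)) : Prop :=
  ∃ (ι : Type) (l : Filter ι) (e : ι → L1 G), l.NeBot ∧
    (∃ C : ℝ, ∀ i, ‖e i‖ ≤ C) ∧ (∀ i, e i ∈ S) ∧
    ∀ f ∈ J, Filter.Tendsto (fun i => ‖conv f (e i) - f‖) l (nhds 0)

lemma one'_mem_LinfQuot (H : Subgroup G) : (one' : Linf G) ∈ LinfQuot H :=
  fun _ _ _ => rfl

lemma Ltrans_mem_LinfQuot {H : Subgroup G} {x : Linf G} (hx : x ∈ LinfQuot H) (s : G) :
    Ltrans s x ∈ LinfQuot H := by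
  intro t h hh
  show x (s * (t * h)) = x (s * t)
  rw [← mul_assoc]
  exact hx (s * t) h hh

/-- `ℓ∞(G/H)` as a subspace of `ℓ∞(G)`. -/
def LinfQuotSub (H : Subgroup G) : Submodule ℂ (Linf G) where
  carrier := LinfQuot H
  add_mem' := by
    intro a b ha hb s h hh
    show (a + b : Linf G) (s * h) = (a + b : Linf G) s
    rw [lp.coeFn_add]
    simp only [Pi.add_apply]
    rw [ha s h hh, hb s h hh]
  zero_mem' := by
    intro s h hh
    show (0 : Linf G) (s * h) = (0 : Linf G) s
    rw [lp.coeFn_zero]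
    simp
  smul_mem' := by
    intro c a ha s h hh
    show (c • a : Linf G) (s * h) = (c • a : Linf G) s
    rw [lp.coeFn_smul]
    simp only [Pi.smul_apply]
    rw [ha s h hh]

/-- The weak* topology on `ℓ∞(G) = ℓ¹(G)*`: the topology induced by the
pairings against elements of `ℓ¹(G)`. -/
def weakStarTop (G : Type*) [Group G] : TopologicalSpace (Linf G) :=
  TopologicalSpace.induced (fun (y : Linf G) => fun f : L1 G => ∑' s, f s * y s)
    Pi.topologicalSpace

-- ===== Auxiliary material for statement7 =====

lemma linf_ext {x y : Linf G} (h : ∀ s, x s = y s) : x = y :=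
  lp.ext (funext h)

lemma norm_le_of_forall {x : Linf G} {C : ℝ} (hC : 0 ≤ C) (h : ∀ s, ‖x s‖ ≤ C) :
    ‖x‖ ≤ C := lp.norm_le_of_forall_le hC h

/-- Evaluation at a point as a continuous linear functional on `ℓ∞(G)`. -/
def evalCLM (g : G) : Linf G →L[ℂ] ℂ :=
  LinearMap.mkContinuous
    { toFun := fun x => x g
      map_add' := fun x y => by
        show (x + y) g = x g + y g
        rw [lp.coeFn_add]; rfl
      map_smul' := fun c x => by
        show (c • x) g = c • x g
        rw [lp.coeFn_smul]; rfl }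
    1 (fun x => by rw [one_mul]; exact norm_apply_le x g)

@[simp] lemma evalCLM_apply (g : G) (x : Linf G) : evalCLM g x = x g := rfl

@[simp] lemma one'_apply (s : G) : (one' : Linf G) s = 1 := rfl

open Classical in
/-- The Dirac function `δ_s ∈ ℓ¹(G)`. -/
def delta (s : G) : L1 G :=
  ⟨fun t => if t = s then 1 else 0, by
    apply memℓp_gen
    refine summable_of_ne_finset_zero (s := ({s} : Finset G)) ?_
    intro t ht
    simp only [Finset.mem_singleton] at ht
    simp [ht]⟩

open Classical in
@[simp] lemma delta_apply (s t : G) : delta s t = if t = s then 1 else 0 := rfl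

lemma Ltrans_one (x : Linf G) : Ltrans 1 x = x :=
  linf_ext fun t => by simp

lemma Ltrans_add (s : G) (x y : Linf G) : Ltrans s (x + y) = Ltrans s x + Ltrans s y :=
  linf_ext fun t => by
    have h1 : (x + y) (s * t) = x (s * t) + y (s * t) := by rw [lp.coeFn_add]; rfl
    have h2 : (Ltrans s x + Ltrans s y) t = Ltrans s x t + Ltrans s y t := by
      rw [lp.coeFn_add]; rfl
    simp [h1, h2]

lemma Ltrans_smul (s : G) (c : ℂ) (x : Linf G) : Ltrans s (c • x) = c • Ltrans s x :=
  linf_ext fun t => by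
    have h1 : (c • x) (s * t) = c * x (s * t) := by rw [lp.coeFn_smul]; rfl
    have h2 : (c • Ltrans s x) t = c * Ltrans s x t := by rw [lp.coeFn_smul]; rfl
    simp [h1, h2]

lemma rAct_delta (x : Linf G) (s : G) : rAct x (delta s) = Ltrans s x := by
  classical
  apply linf_ext; intro t
  have heq : (fun u => delta s u * x (u * t)) = fun u => if u = s then x (s * t) else 0 := by
    funext u
    by_cases hu : u = s
    · rw [delta_apply, if_pos hu, if_pos hu, one_mul, hu]
    · rw [delta_apply, if_neg hu, if_neg hu, zero_mul]
  rw [rAct_apply, Ltrans_apply, heq]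
  exact tsum_ite_eq s _

open Classical in
/-- Pointwise multiplication by `1_H` on `ℓ∞(G)`. -/
def mulL (H : Subgroup G) (x : Linf G) : Linf G :=
  ⟨fun s => if s ∈ H then x s else 0,
    memℓp_infty ⟨‖x‖, by
      rintro r ⟨s, rfl⟩
      show ‖(if s ∈ H then x s else 0 : ℂ)‖ ≤ ‖x‖
      by_cases h : s ∈ H
      · rw [if_pos h]; exact norm_apply_le x s
      · rw [if_neg h, norm_zero]; exact norm_nonneg x⟩⟩

open Classical in
@[simp] lemma mulL_apply (H : Subgroup G) (x : Linf G) (s : G) :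
    mulL H x s = if s ∈ H then x s else 0 := rfl

lemma norm_mulL_le (H : Subgroup G) (x : Linf G) : ‖mulL H x‖ ≤ ‖x‖ :=
  norm_le_of_forall (norm_nonneg x) fun s => by
    rw [mulL_apply]
    by_cases h : s ∈ H
    · rw [if_pos h]; exact norm_apply_le x s
    · rw [if_neg h, norm_zero]; exact norm_nonneg x

lemma mulL_add (H : Subgroup G) (x y : Linf G) :
    mulL H (x + y) = mulL H x + mulL H y :=
  linf_ext fun s => by
    have h1 : (x + y) s = x s + y s := by rw [lp.coeFn_add]; rfl
    have h2 : (mulL H x + mulL H y) s = mulL H x s + mulL H y s := by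
      rw [lp.coeFn_add]; rfl
    rw [h2, mulL_apply, mulL_apply, mulL_apply, h1]
    by_cases h : s ∈ H
    · rw [if_pos h, if_pos h, if_pos h]
    · rw [if_neg h, if_neg h, if_neg h, add_zero]

lemma mulL_smul (H : Subgroup G) (c : ℂ) (x : Linf G) :
    mulL H (c • x) = c • mulL H x :=
  linf_ext fun s => by
    have h1 : (c • x) s = c * x s := by rw [lp.coeFn_smul]; rfl
    have h2 : (c • mulL H x) s = c * mulL H x s := by rw [lp.coeFn_smul]; rfl
    rw [h2, mulL_apply, mulL_apply, h1]
    by_cases h : s ∈ H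
    · rw [if_pos h, if_pos h]
    · rw [if_neg h, if_neg h, mul_zero]

open Classical in
open Classical in
@[simp] lemma indic_apply (H : Subgroup G) (s : G) :
    indic H s = if s ∈ H then 1 else 0 := rfl

lemma indic_mem_LinfQuot (H : Subgroup G) : indic H ∈ LinfQuot H := by
  classical
  intro s h hh
  rw [indic_apply, indic_apply]
  by_cases hs : s ∈ H
  · rw [if_pos hs, if_pos ((H.mul_mem_cancel_right hh).mpr hs)]
  · rw [if_neg hs, if_neg (fun hc => hs ((H.mul_mem_cancel_right hh).mp hc))]

lemma indic_nonneg (H : Subgroup G) : ∀ s, (0 : ℂ) ≤ indic H s := by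
  intro s
  rw [indic_apply]
  split
  · exact zero_le_one
  · exact le_refl _

lemma cdiv_nonneg {z c : ℂ} (hz : 0 ≤ z) (hc : 0 ≤ c) : 0 ≤ z / c := by
  rw [Complex.nonneg_iff] at *
  obtain ⟨hz1, hz2⟩ := hz
  obtain ⟨hc1, hc2⟩ := hc
  constructor
  · rw [Complex.div_re, ← hz2, ← hc2]
    have := Complex.normSq_nonneg c
    positivity
  · rw [Complex.div_im, ← hz2, ← hc2]
    simp

/-- Real part, as an element of `ℓ∞(G)`. -/
def reP (x : Linf G) : Linf G :=
  ⟨fun s => ((x s).re : ℂ),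
    memℓp_infty ⟨‖x‖, by
      rintro r ⟨s, rfl⟩
      simp only [Complex.norm_real]
      exact (Complex.abs_re_le_norm (x s)).trans (norm_apply_le x s)⟩⟩

/-- Imaginary part, as an element of `ℓ∞(G)`. -/
def imP (x : Linf G) : Linf G :=
  ⟨fun s => ((x s).im : ℂ),
    memℓp_infty ⟨‖x‖, by
      rintro r ⟨s, rfl⟩
      simp only [Complex.norm_real]
      exact (Complex.abs_im_le_norm (x s)).trans (norm_apply_le x s)⟩⟩

@[simp] lemma reP_apply (x : Linf G) (s : G) : reP x s = ((x s).re : ℂ) := rfl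
@[simp] lemma imP_apply (x : Linf G) (s : G) : imP x s = ((x s).im : ℂ) := rfl

lemma norm_reP_le (x : Linf G) : ‖reP x‖ ≤ ‖x‖ :=
  norm_le_of_forall (norm_nonneg x) fun s => by
    simp only [reP_apply, Complex.norm_real]
    exact (Complex.abs_re_le_norm (x s)).trans (norm_apply_le x s)

lemma norm_imP_le (x : Linf G) : ‖imP x‖ ≤ ‖x‖ :=
  norm_le_of_forall (norm_nonneg x) fun s => by
    simp only [imP_apply, Complex.norm_real]
    exact (Complex.abs_im_le_norm (x s)).trans (norm_apply_le x s)

lemma decomp (x : Linf G) : x = reP x + Complex.I • imP x :=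
  linf_ext fun s => by
    have h2 : (reP x + Complex.I • imP x) s = reP x s + Complex.I * imP x s := by
      rw [lp.coeFn_add, lp.coeFn_smul]; rfl
    rw [h2, reP_apply, imP_apply, mul_comm]
    exact (Complex.re_add_im (x s)).symm

set_option maxHeartbeats 1000000

@[simp] lemma linf_add_apply (x y : Linf G) (s : G) : (x + y) s = x s + y s := by
  rw [lp.coeFn_add]; rfl

@[simp] lemma linf_smul_apply (c : ℂ) (x : Linf G) (s : G) : (c • x) s = c * x s := by
  rw [lp.coeFn_smul]; rfl

@[simp] lemma linf_neg_apply (x : Linf G) (s : G) : (-x) s = -(x s) := by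
  rw [lp.coeFn_neg]; rfl

lemma statement7_forward {H : Subgroup G} (hA : Amen H) :
    ∃ m : DualLinf G, IsState m ∧ (∀ x : Linf G, starAct m x ∈ LinfQuot H) ∧
      m (indic H) ≠ 0 := by
  obtain ⟨E, ⟨hone, hpos, hquot, hmod⟩, hfix⟩ := hA
  let m₀ : Linf G →ₗ[ℂ] ℂ :=
    { toFun := fun x => E x 1
      map_add' := fun x y => by
        show E (x + y) 1 = E x 1 + E y 1
        rw [map_add, linf_add_apply]
      map_smul' := fun c x => by
        show E (c • x) 1 = c • E x 1
        rw [map_smul, linf_smul_apply, smul_eq_mul] }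
  have heval : ∀ (a : ℝ) (z : Linf G) (t : G), (((a : ℂ) • one' + z : Linf G)) t = (a : ℂ) + z t := by
    intro a z t
    rw [linf_add_apply, linf_smul_apply, one'_apply, mul_one]
  have hreal : ∀ y : Linf G, (∀ s, (y s).im = 0) → ‖E y 1‖ ≤ ‖y‖ := by
    intro y hy
    have h1 : ∀ t, (0 : ℂ) ≤ (((‖y‖ : ℂ) • one' + y : Linf G)) t := by
      intro t
      rw [heval, Complex.nonneg_iff]
      constructor
      · rw [Complex.add_re, Complex.ofReal_re]
        have h := abs_le.mp ((Complex.abs_re_le_norm (y t)).trans (norm_apply_le y t))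
        linarith [h.1]
      · rw [Complex.add_im, Complex.ofReal_im, hy t, add_zero]
    have h2 : ∀ t, (0 : ℂ) ≤ (((‖y‖ : ℂ) • one' + (-y) : Linf G)) t := by
      intro t
      rw [heval, linf_neg_apply, Complex.nonneg_iff]
      constructor
      · rw [Complex.add_re, Complex.ofReal_re, Complex.neg_re]
        have h := abs_le.mp ((Complex.abs_re_le_norm (y t)).trans (norm_apply_le y t))
        linarith [h.2]
      · rw [Complex.add_im, Complex.ofReal_im, Complex.neg_im, hy t, neg_zero, add_zero]
    have e1 : (0 : ℂ) ≤ (‖y‖ : ℂ) + E y 1 := by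
      have h := hpos _ h1 1
      rw [map_add, map_smul, hone, heval ‖y‖ (E y) 1] at h
      exact h
    have e2 : (0 : ℂ) ≤ (‖y‖ : ℂ) + (-(E y 1)) := by
      have h := hpos _ h2 1
      rw [map_add, map_smul, hone, map_neg, heval ‖y‖ (-(E y)) 1, linf_neg_apply] at h
      exact h
    rw [Complex.nonneg_iff] at e1 e2
    obtain ⟨e1r, e1i⟩ := e1
    obtain ⟨e2r, e2i⟩ := e2
    have him : (E y 1).im = 0 := by
      rw [Complex.add_im, Complex.ofReal_im, zero_add] at e1i
      exact e1i.symm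
    have hre : |(E y 1).re| ≤ ‖y‖ := by
      rw [Complex.add_re, Complex.ofReal_re] at e1r e2r
      rw [Complex.neg_re] at e2r
      rw [abs_le]
      constructor <;> linarith
    have hw : E y 1 = (((E y 1).re : ℝ) : ℂ) :=
      Complex.ext rfl (by rw [him, Complex.ofReal_im])
    rw [hw, Complex.norm_real, Real.norm_eq_abs]
    exact hre
  have hbound : ∀ x : Linf G, ‖m₀ x‖ ≤ 2 * ‖x‖ := by
    intro x
    have hdx : E x 1 = E (reP x) 1 + Complex.I * E (imP x) 1 := by
      conv_lhs => rw [decomp x]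
      rw [map_add, map_smul, linf_add_apply, linf_smul_apply]
    show ‖E x 1‖ ≤ 2 * ‖x‖
    rw [hdx]
    calc ‖E (reP x) 1 + Complex.I * E (imP x) 1‖
        ≤ ‖E (reP x) 1‖ + ‖Complex.I * E (imP x) 1‖ := norm_add_le _ _
      _ ≤ ‖x‖ + ‖x‖ := by
          rw [norm_mul, Complex.norm_I, one_mul]
          exact add_le_add
            ((hreal _ fun s => Complex.ofReal_im _).trans (norm_reP_le x))
            ((hreal _ fun s => Complex.ofReal_im _).trans (norm_imP_le x))
      _ = 2 * ‖x‖ := by ring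
  let m : DualLinf G := LinearMap.mkContinuous m₀ 2 hbound
  have hma : ∀ x : Linf G, m x = E x 1 := fun x => rfl
  refine ⟨m, ⟨?_, ?_⟩, ?_, ?_⟩
  · rw [hma, hone]
    rfl
  · intro x hx
    rw [hma]
    exact hpos x hx 1
  · intro x
    have hEe : starAct m x = E x := by
      apply linf_ext
      intro s
      rw [starAct_apply, hma, ← rAct_delta x s, hmod, rAct_delta (E x) s, Ltrans_apply,
        mul_one]
    rw [hEe]
    exact hquot x
  · rw [hma, hfix _ (indic_mem_LinfQuot H), indic_apply, if_pos H.one_mem]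
    exact one_ne_zero

lemma statement7_reverse {H : Subgroup G} (m : DualLinf G) (hm : IsState m)
    (hstar : ∀ x : Linf G, starAct m x ∈ LinfQuot H) (hne : m (indic H) ≠ 0) :
    Amen H := by
  classical
  obtain ⟨hm1, hmpos⟩ := hm
  have hc : (0 : ℂ) ≤ m (indic H) := hmpos _ (indic_nonneg H)
  set c := m (indic H) with hcdef
  have hinv : ∀ h ∈ H, ∀ y : Linf G, m (Ltrans h y) = m y := by
    intro h hh y
    have h2 := hstar y 1 h hh
    rw [starAct_apply, starAct_apply, one_mul, Ltrans_one] at h2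
    exact h2
  have hEmem : ∀ x : Linf G, Memℓp (fun s => m (mulL H (Ltrans s x)) / c) ∞ := by
    intro x
    apply memℓp_infty
    refine ⟨‖m‖ * ‖x‖ / ‖c‖, ?_⟩
    rintro r ⟨s, rfl⟩
    show ‖m (mulL H (Ltrans s x)) / c‖ ≤ ‖m‖ * ‖x‖ / ‖c‖
    rw [norm_div]
    have hcpos : 0 < ‖c‖ := norm_pos_iff.mpr hne
    have hnum : ‖m (mulL H (Ltrans s x))‖ ≤ ‖m‖ * ‖x‖ :=
      (m.le_opNorm _).trans (mul_le_mul_of_nonneg_left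
        ((norm_mulL_le H _).trans (norm_Ltrans_le s x)) (norm_nonneg m))
    gcongr
  let E : Linf G →ₗ[ℂ] Linf G :=
    { toFun := fun x => ⟨fun s => m (mulL H (Ltrans s x)) / c, hEmem x⟩
      map_add' := by
        intro x y
        apply linf_ext
        intro s
        rw [linf_add_apply]
        show m (mulL H (Ltrans s (x + y))) / c
            = m (mulL H (Ltrans s x)) / c + m (mulL H (Ltrans s y)) / c
        rw [Ltrans_add, mulL_add, map_add, add_div]
      map_smul' := by
        intro a x
        apply linf_ext
        intro s
        rw [linf_smul_apply]
        show m (mulL H (Ltrans s (a • x))) / c = a * (m (mulL H (Ltrans s x)) / c)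
        rw [Ltrans_smul, mulL_smul, map_smul, smul_eq_mul, mul_div_assoc] }
  have hEapp : ∀ (x : Linf G) (s : G), E x s = m (mulL H (Ltrans s x)) / c :=
    fun x s => rfl
  have hfix : ∀ x ∈ LinfQuot H, E x = x := by
    intro x hx
    apply linf_ext
    intro s
    rw [hEapp]
    have hkey : mulL H (Ltrans s x) = x s • indic H := by
      apply linf_ext
      intro g
      rw [mulL_apply, linf_smul_apply, indic_apply, Ltrans_apply]
      by_cases hg : g ∈ H
      · rw [if_pos hg, if_pos hg, mul_one, hx s g hg]
      · rw [if_neg hg, if_neg hg, mul_zero]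
    rw [hkey, map_smul, smul_eq_mul]
    exact mul_div_cancel_right₀ (x s) hne
  refine ⟨E, ⟨hfix one' (one'_mem_LinfQuot H), ?_, ?_, ?_⟩, hfix⟩
  · intro x hx s
    rw [hEapp]
    refine cdiv_nonneg (hmpos _ ?_) hc
    intro g
    rw [mulL_apply]
    by_cases hg : g ∈ H
    · rw [if_pos hg, Ltrans_apply]
      exact hx (s * g)
    · rw [if_neg hg]
  · intro x s h hh
    rw [hEapp, hEapp]
    have hkey : mulL H (Ltrans (s * h) x) = Ltrans h (mulL H (Ltrans s x)) := by
      apply linf_ext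
      intro g
      rw [mulL_apply, Ltrans_apply, Ltrans_apply, mulL_apply, Ltrans_apply]
      by_cases hg : g ∈ H
      · rw [if_pos hg, if_pos ((H.mul_mem_cancel_left hh).mpr hg), mul_assoc]
      · rw [if_neg hg, if_neg (fun hc2 => hg ((H.mul_mem_cancel_left hh).mp hc2))]
    rw [hkey, hinv h hh]
  · intro x f
    apply linf_ext
    intro t
    have hsum : Summable (fun u => f u • mulL H (Ltrans (u * t) x)) := by
      apply Summable.of_norm
      refine Summable.of_nonneg_of_le (fun u => norm_nonneg _) (fun u => ?_)
        ((summable_norm f).mul_right ‖x‖)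
      rw [norm_smul]
      exact mul_le_mul_of_nonneg_left
        ((norm_mulL_le H _).trans (norm_Ltrans_le _ x)) (norm_nonneg _)
    have hkey : mulL H (Ltrans t (rAct x f)) = ∑' u, f u • mulL H (Ltrans (u * t) x) := by
      apply linf_ext
      intro g
      have hev : (∑' u, f u • mulL H (Ltrans (u * t) x)) g
          = ∑' u, (f u • mulL H (Ltrans (u * t) x)) g := by
        have h := (evalCLM (G := G) g).map_tsum hsum
        simpa using h
      rw [hev, mulL_apply, Ltrans_apply]
      have hterm : ∀ u, (f u • mulL H (Ltrans (u * t) x)) g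
          = f u * (if g ∈ H then x (u * t * g) else 0) := by
        intro u
        rw [linf_smul_apply, mulL_apply, Ltrans_apply]
      rw [tsum_congr hterm]
      by_cases hg : g ∈ H
      · rw [if_pos hg, rAct_apply]
        simp only [if_pos hg]
        exact tsum_congr fun u => by rw [mul_assoc]
      · rw [if_neg hg]
        simp only [if_neg hg, mul_zero, tsum_zero]
    calc E (rAct x f) t = m (mulL H (Ltrans t (rAct x f))) / c := hEapp _ _
      _ = (∑' u, m (f u • mulL H (Ltrans (u * t) x))) / c := by
          rw [hkey, m.map_tsum hsum]
      _ = ∑' u, f u * (m (mulL H (Ltrans (u * t) x)) / c) := by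
          rw [← tsum_div_const]
          exact tsum_congr fun u => by rw [map_smul, smul_eq_mul, mul_div_assoc]
      _ = rAct (E x) f t := by
          rw [rAct_apply]
          exact tsum_congr fun u => by rw [hEapp]


/-- `ℓ∞(G/H)` is amenable iff there is a state `m` with
`m * ℓ∞(G) ⊆ ℓ∞(G/H)` and `m(1_H) ≠ 0`. -/
theorem statement7 (H : Subgroup G) :
    Amen H ↔ ∃ m : DualLinf G, IsState m ∧ (∀ x : Linf G, starAct m x ∈ LinfQuot H) ∧
      m (indic H) ≠ 0 := by
  constructor
  · exact statement7_forward
  · rintro ⟨m, hm, hstar, hne⟩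
    exact statement7_reverse m hm hstar hne

end QG
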